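/- Let n ≥ 1 and d ≥ 1 be integers and let Q(x) = A_0 + Σ_{α=1}^d A_α s_α(x) + Σ_{α=1}^d A_{αα} s_{αα}(x). Then Q(x) ≥ 0 for all x ∈ K_n^d (the product of n closed unit balls in ℝ^d) if and only if Q(x) ≥ 0 for all x ∈ (S^{d−1})^n (the product of n unit spheres). -/

import Mathlib

open scoped BigOperators
open Finset

/-- `sLin n d α x = ∑ i, ξ_{i,α}` -/
noncomputable def sLin (n d : ℕ) (α : Fin d) (x : Fin n → Fin d → ℝ) : ℝ :=
  ∑ i, x i α

/-- `sQuad n d α x = ∑_{i ≠ j} ξ_{i,α} ξ_{j,α}` (sum over ordered pairs). -/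
noncomputable def sQuad (n d : ℕ) (α : Fin d) (x : Fin n → Fin d → ℝ) : ℝ :=
  ∑ i, ∑ j, if i = j then 0 else x i α * x j α

/-- `Qpoly n d A0 A B x = A0 + ∑ α A_α s_α(x) + ∑ α A_{αα} s_{αα}(x)` -/
noncomputable def Qpoly (n d : ℕ) (A0 : ℝ) (A B : Fin d → ℝ)
    (x : Fin n → Fin d → ℝ) : ℝ :=
  A0 + ∑ α, A α * sLin n d α x + ∑ α, B α * sQuad n d α x

lemma double_split (n : ℕ) (u : Fin n → ℝ) (i : Fin n) :
  ∑ j, ∑ k, (if j = k then 0 else u j * u k)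
  = u i * (∑ k ∈ univ.erase i, u k) + (∑ j ∈ univ.erase i, u j) * u i
    + ∑ j ∈ univ.erase i, ∑ k ∈ univ.erase i, (if j = k then 0 else u j * u k) := by
  rw [← Finset.add_sum_erase _ _ (Finset.mem_univ i)]
  conv_lhs => rw [← Finset.add_sum_erase _ (fun k => if i = k then 0 else u i * u k) (Finset.mem_univ i)]
  simp only [if_pos rfl]
  rw [Finset.sum_congr rfl (fun j hj => (Finset.add_sum_erase _ (fun k => if j = k then 0 else u j * u k) (Finset.mem_univ i)).symm)]
  rw [Finset.sum_add_distrib]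
  have h1 : ∀ j ∈ univ.erase i, (if j = i then 0 else u j * u i) = u j * u i := by
    intro j hj; rw [if_neg (Finset.ne_of_mem_erase hj)]
  rw [Finset.sum_congr rfl h1, ← Finset.sum_mul]
  have h2 : ∀ k ∈ univ.erase i, (if i = k then 0 else u i * u k) = u i * u k := by
    intro k hk; rw [if_neg (Finset.ne_of_mem_erase hk).symm]
  rw [Finset.sum_congr rfl h2, ← Finset.mul_sum]
  ring_nf
  simp

lemma update_app (n d : ℕ) (x : Fin n → Fin d → ℝ) (i j : Fin n) (v : Fin d → ℝ) (α : Fin d) :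
    Function.update x i v j α = Function.update (fun j' => x j' α) i (v α) j := by
  rcases eq_or_ne j i with rfl | h
  · simp
  · simp [Function.update_of_ne h]

lemma sLin_update (n d : ℕ) (x : Fin n → Fin d → ℝ) (i : Fin n) (v : Fin d → ℝ) (α : Fin d) :
    sLin n d α (Function.update x i v) = v α + ∑ j ∈ univ.erase i, x j α := by
  unfold sLin
  simp only [update_app]
  rw [← Finset.add_sum_erase _ _ (Finset.mem_univ i), Function.update_self]
  congr 1
  exact Finset.sum_congr rfl (fun j hj => by
    rw [Function.update_of_ne (Finset.ne_of_mem_erase hj)])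

lemma sQuad_update (n d : ℕ) (x : Fin n → Fin d → ℝ) (i : Fin n) (v : Fin d → ℝ) (α : Fin d) :
    sQuad n d α (Function.update x i v)
      = (∑ j ∈ univ.erase i, ∑ k ∈ univ.erase i, if j = k then 0 else x j α * x k α)
        + 2 * v α * ∑ j ∈ univ.erase i, x j α := by
  unfold sQuad
  simp only [update_app]
  rw [double_split n _ i, Function.update_self]
  have he : ∀ j ∈ univ.erase i, Function.update (fun j' => x j' α) i (v α) j = x j α := by
    intro j hj; rw [Function.update_of_ne (Finset.ne_of_mem_erase hj)]
  have hdd : ∑ j ∈ univ.erase i, ∑ k ∈ univ.erase i,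
      (if j = k then 0 else Function.update (fun j' => x j' α) i (v α) j *
        Function.update (fun j' => x j' α) i (v α) k)
      = ∑ j ∈ univ.erase i, ∑ k ∈ univ.erase i, if j = k then 0 else x j α * x k α :=
    Finset.sum_congr rfl fun j hj => Finset.sum_congr rfl fun k hk => by
      rw [he j hj, he k hk]
  rw [Finset.sum_congr rfl he, hdd]
  ring

lemma Qpoly_update (n d : ℕ) (A0 : ℝ) (A B : Fin d → ℝ) (x : Fin n → Fin d → ℝ)
    (i : Fin n) (v : Fin d → ℝ) :
    Qpoly n d A0 A B (Function.update x i v)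
      = Qpoly n d A0 A B (Function.update x i 0)
        + ∑ α, (A α + 2 * B α * ∑ j ∈ univ.erase i, x j α) * v α := by
  unfold Qpoly
  simp only [sLin_update, sQuad_update, Pi.zero_apply, mul_zero, zero_mul, add_zero, zero_add,
    mul_add, add_mul, Finset.sum_add_distrib]
  rw [Finset.sum_congr rfl (fun α _ => show B α * (2 * v α * ∑ j ∈ univ.erase i, x j α)
      = 2 * B α * (∑ j ∈ univ.erase i, x j α) * v α from by ring)]
  ring

lemma step (n d : ℕ) (hd : 1 ≤ d) (A0 : ℝ) (A B : Fin d → ℝ) (x : Fin n → Fin d → ℝ)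
    (i : Fin n) (hx : ∑ α, (x i α) ^ 2 ≤ 1) :
    ∃ u : Fin d → ℝ, (∑ α, u α ^ 2 = 1) ∧
      Qpoly n d A0 A B (Function.update x i u) ≤ Qpoly n d A0 A B x := by
  set w : Fin d → ℝ := fun α => A α + 2 * B α * ∑ j ∈ univ.erase i, x j α with hw
  have hQx : Qpoly n d A0 A B x
      = Qpoly n d A0 A B (Function.update x i 0) + ∑ α, w α * x i α := by
    conv_lhs => rw [← Function.update_eq_self i x]
    rw [Qpoly_update]
  set N : ℝ := Real.sqrt (∑ α, w α ^ 2) with hN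
  have hN0 : 0 ≤ N := Real.sqrt_nonneg _
  have hNsq : N ^ 2 = ∑ α, w α ^ 2 := Real.sq_sqrt (by positivity)
  by_cases hw0 : ∀ α, w α = 0
  · refine ⟨fun α => if α = ⟨0, hd⟩ then 1 else 0, ?_, ?_⟩
    · simp [apply_ite (· ^ 2)]
    · rw [Qpoly_update, hQx]
      have h0 : ∀ (v : Fin d → ℝ), ∑ α, w α * v α = 0 := by
        intro v; simp [hw0]
      have hwa : ∀ α, A α + 2 * B α * ∑ j ∈ univ.erase i, x j α = w α := fun α => rfl
      simp only [hwa]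
      rw [h0, h0]
  · push_neg at hw0
    obtain ⟨α₀, hα₀⟩ := hw0
    have hpos : 0 < ∑ α, w α ^ 2 :=
      Finset.sum_pos' (fun α _ => sq_nonneg _) ⟨α₀, Finset.mem_univ _, by positivity⟩
    have hNpos : 0 < N := Real.sqrt_pos.2 hpos
    refine ⟨fun α => -(w α / N), ?_, ?_⟩
    · have : ∑ α, (-(w α / N)) ^ 2 = (∑ α, w α ^ 2) / N ^ 2 := by
        rw [Finset.sum_div]
        exact Finset.sum_congr rfl fun α _ => by field_simp
      rw [this, hNsq]
      field_simp
    · rw [Qpoly_update, hQx]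
      have hwa : ∀ α, A α + 2 * B α * ∑ j ∈ univ.erase i, x j α = w α := fun α => rfl
      simp only [hwa]
      have hcs : (∑ α, w α * x i α) ^ 2 ≤ (∑ α, w α ^ 2) * ∑ α, (x i α) ^ 2 :=
        Finset.sum_mul_sq_le_sq_mul_sq _ _ _
      have hlhs : ∑ α, w α * -(w α / N) = -N := by
        have : ∑ α, w α * -(w α / N) = -((∑ α, w α ^ 2) / N) := by
          calc ∑ α, w α * -(w α / N) = ∑ α, -(w α ^ 2 / N) :=
                Finset.sum_congr rfl fun α _ => by ring
            _ = -((∑ α, w α ^ 2) / N) := by rw [Finset.sum_neg_distrib, Finset.sum_div]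
        rw [this, ← hNsq]
        field_simp [sq]
      rw [hlhs]
      have hb : (∑ α, w α * x i α) ^ 2 ≤ N ^ 2 := by
        rw [hNsq]
        calc (∑ α, w α * x i α) ^ 2 ≤ (∑ α, w α ^ 2) * ∑ α, (x i α) ^ 2 := hcs
          _ ≤ (∑ α, w α ^ 2) * 1 := by
              exact mul_le_mul_of_nonneg_left hx (le_of_lt hpos)
          _ = ∑ α, w α ^ 2 := mul_one _
      nlinarith [hb, hN0]

lemma exists_sphere (n d : ℕ) (hd : 1 ≤ d) (A0 : ℝ) (A B : Fin d → ℝ)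
    (S : Finset (Fin n)) :
    ∀ x : Fin n → Fin d → ℝ, (∀ i, ∑ α, (x i α) ^ 2 ≤ 1) →
      ∃ y : Fin n → Fin d → ℝ, (∀ i, ∑ α, (y i α) ^ 2 ≤ 1) ∧
        (∀ i ∈ S, ∑ α, (y i α) ^ 2 = 1) ∧
        Qpoly n d A0 A B y ≤ Qpoly n d A0 A B x := by
  induction S using Finset.induction_on with
  | empty => exact fun x hx => ⟨x, hx, by simp, le_refl _⟩
  | insert i S hiS IH =>
    intro x hx
    obtain ⟨y, hy1, hy2, hy3⟩ := IH x hx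
    obtain ⟨u, hu1, hu2⟩ := step n d hd A0 A B y i (hy1 i)
    refine ⟨Function.update y i u, ?_, ?_, hu2.trans hy3⟩
    · intro j
      rcases eq_or_ne j i with rfl | h
      · simp [hu1]
      · simpa [Function.update_of_ne h] using hy1 j
    · intro j hj
      rcases eq_or_ne j i with rfl | h
      · simp [hu1]
      · rw [Function.update_of_ne h]
        exact hy2 j (Finset.mem_of_mem_insert_of_ne hj h)

theorem stmt_1 (n d : ℕ) (hn : 1 ≤ n) (hd : 1 ≤ d)
    (A0 : ℝ) (A B : Fin d → ℝ) :
    (∀ x : Fin n → Fin d → ℝ, (∀ i, ∑ α, (x i α) ^ 2 ≤ 1) →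
      0 ≤ Qpoly n d A0 A B x) ↔
    (∀ x : Fin n → Fin d → ℝ, (∀ i, ∑ α, (x i α) ^ 2 = 1) →
      0 ≤ Qpoly n d A0 A B x) := by
  constructor
  · intro h x hx
    exact h x (fun i => le_of_eq (hx i))
  · intro h x hx
    obtain ⟨y, hy1, hy2, hy3⟩ := exists_sphere n d hd A0 A B Finset.univ x hx
    exact le_trans (h y (fun i => hy2 i (Finset.mem_univ i))) hy3
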